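/- The maximal deviation between CLσ(u|d) and the clipped ReLU min(max(u,0),d) over u ∈ ℝ is (d/2)(1 - s(σ|d)), attained at u = 0 and u = d with opposite signs. -/
import Mathlib


noncomputable def F (u : ℝ) : ℝ := if u ≤ 0 then Real.exp u / 2 else 1 - Real.exp (-u) / 2

noncomputable def L (σ u : ℝ) : ℝ := -σ * Real.log (1 - F (u / σ))

noncomputable def s (σ d : ℝ) : ℝ := (d / 2) / (d / 2 + σ * Real.log 2)

noncomputable def CL (σ d u : ℝ) : ℝ :=
  s σ d * (L σ u - u - L σ (d - u)) + d / 2 * (1 + s σ d)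

lemma L_eq {σ : ℝ} (hσ : 0 < σ) {u : ℝ} (hu : 0 ≤ u) : L σ u = u + σ * Real.log 2 := by
  have ht : 0 ≤ u / σ := div_nonneg hu hσ.le
  have hF : 1 - F (u / σ) = Real.exp (-(u / σ)) / 2 := by
    unfold F
    split_ifs with h
    · have h0 : u / σ = 0 := le_antisymm h ht
      rw [h0]; norm_num
    · ring
  have hσ' : σ ≠ 0 := hσ.ne'
  unfold L
  rw [hF, Real.log_div (Real.exp_ne_zero _) two_ne_zero, Real.log_exp]
  field_simp
  ring

lemma L_lt {σ : ℝ} (hσ : 0 < σ) {u : ℝ} (hu : u < 0) :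
    0 < L σ u ∧ L σ u < σ * Real.log 2 := by
  have ht : u / σ < 0 := div_neg_of_neg_of_pos hu hσ
  have hF : F (u / σ) = Real.exp (u / σ) / 2 := by unfold F; rw [if_pos ht.le]
  have he1 : Real.exp (u / σ) < 1 := Real.exp_lt_one_iff.mpr ht
  have he0 : 0 < Real.exp (u / σ) := Real.exp_pos _
  have hx1 : (1:ℝ)/2 < 1 - Real.exp (u / σ) / 2 := by linarith
  have hx2 : 1 - Real.exp (u / σ) / 2 < 1 := by linarith
  have hlog1 : Real.log (1 - Real.exp (u / σ) / 2) < 0 := Real.log_neg (by linarith) hx2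
  have hlog2 : -Real.log 2 < Real.log (1 - Real.exp (u / σ) / 2) := by
    have := Real.log_lt_log (by norm_num : (0:ℝ) < 1/2) hx1
    rwa [show (1:ℝ)/2 = 2⁻¹ by norm_num, Real.log_inv] at this
  unfold L
  rw [hF]
  constructor <;> nlinarith

theorem stmt19 (d : ℝ) (hd : 0 < d) (σ : ℝ) (hσ : 0 < σ) :
    (⨆ u : ℝ, |CL σ d u - min (max u 0) d|) = d / 2 * (1 - s σ d) ∧
    CL σ d 0 - min (max (0 : ℝ) 0) d = d / 2 * (1 - s σ d) ∧
    CL σ d d - min (max d 0) d = -(d / 2 * (1 - s σ d)) := by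
  have hb : 0 < σ * Real.log 2 := mul_pos hσ (Real.log_pos one_lt_two)
  have hden : 0 < d / 2 + σ * Real.log 2 := by linarith
  have hsdef : s σ d = (d / 2) / (d / 2 + σ * Real.log 2) := rfl
  have hs0 : 0 < s σ d := hsdef ▸ div_pos (by linarith) hden
  have hs1 : s σ d < 1 := by rw [hsdef, div_lt_one hden]; linarith
  have hkey : s σ d * (σ * Real.log 2) = d / 2 * (1 - s σ d) := by
    rw [hsdef]; field_simp; ring
  -- the pointwise bound
  have hbound : ∀ u : ℝ, |CL σ d u - min (max u 0) d| ≤ d / 2 * (1 - s σ d) := by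
    intro u
    rcases lt_or_ge u 0 with hu | hu
    · have h1 := L_lt hσ hu
      have h2 : L σ (d - u) = (d - u) + σ * Real.log 2 := L_eq hσ (by linarith)
      have hmax : max u 0 = 0 := max_eq_right hu.le
      have heq : CL σ d u - min (max u 0) d = s σ d * L σ u := by
        unfold CL
        rw [h2, hmax, min_eq_left hd.le]
        linear_combination -hkey
      rw [heq, abs_of_pos (mul_pos hs0 h1.1)]
      nlinarith [mul_lt_mul_of_pos_left h1.2 hs0]
    · rcases le_or_gt u d with hud | hud
      · have h1 : L σ u = u + σ * Real.log 2 := L_eq hσ hu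
        have h2 : L σ (d - u) = (d - u) + σ * Real.log 2 := L_eq hσ (by linarith)
        have hmax : max u 0 = u := max_eq_left hu
        unfold CL
        rw [h1, h2, hmax, min_eq_left hud, abs_le]
        constructor
        · nlinarith [mul_nonneg (by linarith : (0:ℝ) ≤ 1 - s σ d) (by linarith : (0:ℝ) ≤ d - u)]
        · nlinarith [mul_nonneg (by linarith : (0:ℝ) ≤ 1 - s σ d) hu]
      · have h1 : L σ u = u + σ * Real.log 2 := L_eq hσ (by linarith)
        have h2 := L_lt hσ (show d - u < 0 by linarith)
        have hmax : max u 0 = u := max_eq_left (by linarith)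
        have heq : CL σ d u - min (max u 0) d = -(s σ d * L σ (d - u)) := by
          unfold CL
          rw [h1, hmax, min_eq_right hud.le]
          linear_combination hkey
        rw [heq, abs_neg, abs_of_pos (mul_pos hs0 h2.1)]
        nlinarith [mul_lt_mul_of_pos_left h2.2 hs0]
  have h0 : CL σ d 0 - min (max (0 : ℝ) 0) d = d / 2 * (1 - s σ d) := by
    unfold CL
    rw [L_eq hσ le_rfl, L_eq hσ (by linarith : (0:ℝ) ≤ d - 0)]
    rw [max_self, min_eq_left hd.le]
    ring
  have hdd : CL σ d d - min (max d 0) d = -(d / 2 * (1 - s σ d)) := by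
    unfold CL
    rw [L_eq hσ hd.le, L_eq hσ (by linarith : (0:ℝ) ≤ d - d)]
    rw [max_eq_left hd.le, min_self]
    ring
  refine ⟨?_, h0, hdd⟩
  have hB : BddAbove (Set.range fun u : ℝ => |CL σ d u - min (max u 0) d|) :=
    ⟨d / 2 * (1 - s σ d), by rintro y ⟨u, rfl⟩; exact hbound u⟩
  apply le_antisymm (ciSup_le hbound)
  have hle := le_ciSup hB 0
  calc d / 2 * (1 - s σ d) = |CL σ d 0 - min (max (0:ℝ) 0) d| := by
        rw [h0, abs_of_nonneg (by nlinarith)]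
    _ ≤ _ := hle
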